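/- arXiv:2101.11544 — 4 statements merged into one kernel-verified Lean document; each statement's English description precedes it below -/
import Mathlib

section
/- Let μ_f be a regular finite complex Borel measure on ℝ with supp μ_f ⊆ [−σ, σ] for some σ > 0, and let f(ξ) = ∫_ℝ e^{−2πi x ξ} dμ_f(x) be its Fourier transform. Suppose f is n-periodic for some n > 0. Then f is a trigonometric polynomial: f(ξ) = Σ_{k = −N}^{N} ĉ_k e^{2πi k ξ / n} for all ξ ∈ ℝ, where N = ⌊σ n⌋ and ĉ_k = (1/n) ∫_0^n f(t) e^{−2πi k t / n} dt. -/
open MeasureTheory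
open Complex Real

lemma exp_norm_one (z : ℂ) (h : z.re = 0) : ‖Complex.exp z‖ = 1 := by
  rw [Complex.norm_exp, h, Real.exp_zero]

lemma aux_cont (μ : Measure ℝ) [IsFiniteMeasure μ] :
    Continuous fun ξ : ℝ => ∫ x, Complex.exp (-2 * Real.pi * Complex.I * x * ξ) ∂μ := by
  apply continuous_of_dominated (bound := fun _ => (1 : ℝ))
  · intro ξ
    exact Continuous.aestronglyMeasurable (by fun_prop)
  · intro ξ
    filter_upwards with x
    rw [exp_norm_one _ (by simp)]
  · exact integrable_const 1
  · filter_upwards with x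
    fun_prop

lemma aux_bound (μ : Measure ℝ) [IsFiniteMeasure μ] (σ : ℝ) (hsupp : μ (Set.Icc (-σ) σ)ᶜ = 0)
    (c d : ℝ) (hd : 0 < d) (hdist : ∀ x ∈ Set.Icc (-σ) σ, d ≤ |x + c|) (T : ℝ) (hT : 0 ≤ T) :
    ‖∫ t in (0:ℝ)..T, (∫ x, Complex.exp (-2 * Real.pi * Complex.I * x * t) ∂μ) *
        Complex.exp (-2 * Real.pi * Complex.I * c * t)‖
      ≤ (1 / (Real.pi * d)) * (μ Set.univ).toReal := by
  have step1 : ∀ t : ℝ, (∫ x, Complex.exp (-2 * Real.pi * Complex.I * x * t) ∂μ) *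
      Complex.exp (-2 * Real.pi * Complex.I * c * t)
      = ∫ x, Complex.exp ((-2 * Real.pi * Complex.I * (x + c)) * t) ∂μ := by
    intro t
    rw [← integral_mul_const]
    congr 1; funext x
    rw [← Complex.exp_add]; congr 1; push_cast; ring
  simp only [step1]
  rw [intervalIntegral.integral_of_le hT]
  haveI : IsFiniteMeasure (volume.restrict (Set.Ioc (0:ℝ) T)) :=
    ⟨by rw [Measure.restrict_apply_univ]; exact measure_Ioc_lt_top⟩
  have hInt : Integrable (Function.uncurry fun (t x : ℝ) =>
      Complex.exp ((-2 * Real.pi * Complex.I * ((x:ℂ) + (c:ℂ))) * (t:ℂ)))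
      ((volume.restrict (Set.Ioc (0:ℝ) T)).prod μ) := by
    apply Integrable.mono' (integrable_const (1:ℝ))
    · exact Continuous.aestronglyMeasurable (by fun_prop)
    · filter_upwards with p
      rw [Function.uncurry_apply_pair, exp_norm_one _ (by simp)]
  rw [MeasureTheory.integral_integral_swap hInt]
  apply norm_integral_le_of_norm_le_const
  have hae : ∀ᵐ x ∂μ, x ∈ Set.Icc (-σ) σ := by
    rw [ae_iff, ← Set.compl_def]
    exact hsupp
  filter_upwards [hae] with x hx
  have hdx : d ≤ |x + c| := hdist x hx
  have hxc : x + c ≠ 0 := by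
    intro h; rw [h, abs_zero] at hdx; linarith
  have hA : (-2 * (Real.pi:ℂ) * Complex.I * ((x:ℂ) + (c:ℂ))) ≠ 0 := by
    apply mul_ne_zero
    · apply mul_ne_zero (by apply mul_ne_zero <;> simp [Real.pi_ne_zero]) Complex.I_ne_zero
    · rw [show ((x:ℂ) + (c:ℂ)) = ((x + c : ℝ) : ℂ) by push_cast; ring]
      exact_mod_cast hxc
  rw [← intervalIntegral.integral_of_le hT,
    integral_exp_mul_complex hA]
  have hnormA : ‖(-2 * (Real.pi:ℂ) * Complex.I * ((x:ℂ) + (c:ℂ)))‖ = 2 * Real.pi * |x + c| := by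
    have e1 : (-2 * (Real.pi:ℂ) * Complex.I * ((x:ℂ)+(c:ℂ)))
        = ((-2*Real.pi : ℝ):ℂ) * Complex.I * ((x+c : ℝ):ℂ) := by push_cast; ring
    rw [e1, norm_mul, norm_mul, Complex.norm_I, Complex.norm_real, Complex.norm_real,
      Real.norm_eq_abs, Real.norm_eq_abs, abs_of_neg (by nlinarith [Real.pi_pos] : (-2*Real.pi) < 0)]
    ring
  rw [norm_div, hnormA]
  have h1 : ‖Complex.exp (-2 * (Real.pi:ℂ) * Complex.I * ((x:ℂ) + (c:ℂ)) * (T:ℂ)) -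
      Complex.exp (-2 * (Real.pi:ℂ) * Complex.I * ((x:ℂ) + (c:ℂ)) * ((0:ℝ):ℂ))‖ ≤ 2 := by
    apply le_trans (norm_sub_le _ _)
    rw [exp_norm_one _ (by simp), exp_norm_one _ (by simp)]
    norm_num
  have hpos : 0 < 2 * Real.pi * |x + c| := by
    have h := Real.pi_pos
    have : 0 < |x + c| := lt_of_lt_of_le hd hdx
    positivity
  calc ‖Complex.exp (-2 * (Real.pi:ℂ) * Complex.I * ((x:ℂ) + (c:ℂ)) * (T:ℂ)) -
      Complex.exp (-2 * (Real.pi:ℂ) * Complex.I * ((x:ℂ) + (c:ℂ)) * ((0:ℝ):ℂ))‖ / (2 * Real.pi * |x + c|)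
      ≤ 2 / (2 * Real.pi * |x + c|) := div_le_div_of_nonneg_right h1 hpos.le |>.trans_eq rfl
    _ = 1 / (Real.pi * |x + c|) := by
        rw [div_eq_div_iff hpos.ne' (by have := Real.pi_pos; have : 0 < |x+c| := lt_of_lt_of_le hd hdx; positivity : (0:ℝ) < Real.pi * |x+c|).ne']
        ring
    _ ≤ 1 / (Real.pi * d) := by
        apply one_div_le_one_div_of_le (by have := Real.pi_pos; positivity)
        exact mul_le_mul_of_nonneg_left hdx Real.pi_pos.le

/-- Integral of a complex-valued function with respect to the complex measure
`μ = (μ₁ - μ₂) + i (μ₃ - μ₄)`, given via the Hahn/Jordan decomposition of its real and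
imaginary parts into finite non-negative measures. -/
noncomputable def complexMeasureIntegral (μ₁ μ₂ μ₃ μ₄ : Measure ℝ) (g : ℝ → ℂ) : ℂ :=
  ((∫ x, g x ∂μ₁) - ∫ x, g x ∂μ₂) + Complex.I * ((∫ x, g x ∂μ₃) - ∫ x, g x ∂μ₄)

/-- Let `μ_f` be a regular finite complex Borel measure on `ℝ` (written via its Jordan
decomposition as `(μ₁ - μ₂) + i(μ₃ - μ₄)` with `μ₁, …, μ₄` finite non-negative Borel
measures) with `supp μ_f ⊆ [−σ, σ]` for some `σ > 0`, and let
`f ξ = ∫ e^{−2πi x ξ} dμ_f(x)` be its Fourier transform.  Suppose `f` is `n`-periodic for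
some `n > 0`.  Then `f` is a trigonometric polynomial:
`f ξ = Σ_{k = −N}^{N} ĉ_k e^{2πi k ξ / n}` for all `ξ`, where `N = ⌊σ n⌋` and
`ĉ_k = (1/n) ∫_0^n f(t) e^{−2πi k t / n} dt`. -/
theorem bandlimited_periodic_is_trigonometric_polynomial
    (σ n : ℝ) (hσ : 0 < σ) (hn : 0 < n)
    (μ₁ μ₂ μ₃ μ₄ : Measure ℝ)
    [IsFiniteMeasure μ₁] [IsFiniteMeasure μ₂] [IsFiniteMeasure μ₃] [IsFiniteMeasure μ₄]
    (hsupp₁ : μ₁ (Set.Icc (-σ) σ)ᶜ = 0) (hsupp₂ : μ₂ (Set.Icc (-σ) σ)ᶜ = 0)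
    (hsupp₃ : μ₃ (Set.Icc (-σ) σ)ᶜ = 0) (hsupp₄ : μ₄ (Set.Icc (-σ) σ)ᶜ = 0)
    (f : ℝ → ℂ)
    (hf : ∀ ξ : ℝ, f ξ = complexMeasureIntegral μ₁ μ₂ μ₃ μ₄
      (fun x => Complex.exp (-2 * Real.pi * Complex.I * x * ξ)))
    (hper : ∀ ξ : ℝ, f (ξ + n) = f ξ) :
    ∀ ξ : ℝ, f ξ =
      ∑ k ∈ Finset.Icc (-⌊σ * n⌋) ⌊σ * n⌋,
        ((1 / (n : ℂ)) * ∫ t in (0 : ℝ)..n,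
            f t * Complex.exp (-2 * Real.pi * Complex.I * k * t / n)) *
          Complex.exp (2 * Real.pi * Complex.I * k * ξ / n) := by
  haveI hfact : Fact (0 < n) := ⟨hn⟩
  have hπ := Real.pi_pos
  have hfc : Continuous f := by
    rw [show f = fun ξ : ℝ => complexMeasureIntegral μ₁ μ₂ μ₃ μ₄
      (fun x => Complex.exp (-2 * Real.pi * Complex.I * x * ξ)) from funext hf]
    simp only [complexMeasureIntegral]
    exact (((aux_cont μ₁).sub (aux_cont μ₂)).add
      (continuous_const.mul ((aux_cont μ₃).sub (aux_cont μ₄))))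
  have hper' : Function.Periodic f n := hper
  have hFc : Continuous (hper'.lift) := hfc.quotient_liftOn' _
  set F : C(AddCircle n, ℂ) := ⟨hper'.lift, hFc⟩ with hFdef
  have hFcoe : ∀ x : ℝ, F (x : AddCircle n) = f x := fun x => rfl
  have hcoeff : ∀ k : ℤ, fourierCoeff (⇑F) k
      = (1 / (n:ℂ)) * ∫ t in (0:ℝ)..n,
          f t * Complex.exp (-2 * Real.pi * Complex.I * k * t / n) := by
    intro k
    rw [fourierCoeff_eq_intervalIntegral (⇑F) k 0, zero_add, Complex.real_smul]
    congr 1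
    · push_cast
      ring
    · apply intervalIntegral.integral_congr
      intro t _
      show fourier (-k) (t : AddCircle n) • F (t : AddCircle n)
        = f t * Complex.exp (-2 * Real.pi * Complex.I * k * t / n)
      rw [hFcoe, fourier_coe_apply, smul_eq_mul, mul_comm]
      congr 1
      push_cast
      ring
  have hvanish : ∀ k ∉ Finset.Icc (-⌊σ * n⌋) ⌊σ * n⌋, fourierCoeff (⇑F) k = 0 := by
    intro k hk
    have habs : σ * n < |(k:ℝ)| := by
      have h1 : σ * n < (⌊σ*n⌋ : ℝ) + 1 := Int.lt_floor_add_one _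
      have h2 : (⌊σ*n⌋ : ℤ) + 1 ≤ |k| := by
        rw [Finset.mem_Icc, not_and_or, not_le, not_le] at hk
        rcases hk with hk | hk
        · have : ⌊σ*n⌋ + 1 ≤ -k := by omega
          exact le_trans this (neg_le_abs k)
        · exact le_trans (by omega) (le_abs_self k)
      have h3 : ((⌊σ*n⌋ : ℤ) + 1 : ℝ) ≤ |(k:ℝ)| := by
        rw [← Int.cast_abs]
        exact_mod_cast h2
      push_cast at h3
      linarith
    set c : ℝ := (k:ℝ)/n with hc
    set d : ℝ := |(k:ℝ)|/n - σ with hd0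
    have hd : 0 < d := by
      rw [hd0, sub_pos, lt_div_iff₀ hn]
      linarith
    have hdist : ∀ x ∈ Set.Icc (-σ) σ, d ≤ |x + c| := by
      intro x hx
      have hxa : |x| ≤ σ := abs_le.2 ⟨hx.1, hx.2⟩
      have hca : |c| = |(k:ℝ)|/n := by rw [hc, abs_div, abs_of_pos hn]
      have h3 : |c| - |x| ≤ |x + c| := by
        have h4 := abs_sub_abs_le_abs_sub c (-x)
        simpa [sub_neg_eq_add, add_comm] using h4
      rw [hd0]
      linarith
    set g : ℝ → ℂ := fun t => f t * Complex.exp (-2 * Real.pi * Complex.I * c * t) with hgdef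
    have hgc : Continuous g := hfc.mul (by fun_prop)
    have hgint : ∀ a b : ℝ, IntervalIntegrable g volume a b :=
      fun a b => hgc.intervalIntegrable a b
    have hcn : (c:ℂ) * (n:ℂ) = (k:ℂ) := by
      have hn' : (n:ℂ) ≠ 0 := by exact_mod_cast hn.ne'
      rw [hc]
      push_cast
      field_simp
    have hgper : Function.Periodic g n := by
      intro t
      show f (t+n) * Complex.exp (-2 * Real.pi * Complex.I * c * ((t+n : ℝ) : ℂ))
        = f t * Complex.exp (-2 * Real.pi * Complex.I * c * ((t : ℝ) : ℂ))
      rw [hper t]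
      congr 1
      have hexp : (-2 * (Real.pi:ℂ) * Complex.I * (c:ℂ) * ((t:ℂ)+(n:ℂ)))
          = -2 * (Real.pi:ℂ) * Complex.I * (c:ℂ) * (t:ℂ)
            + ((-k : ℤ) : ℂ) * (2*(Real.pi:ℂ)*Complex.I) := by
        push_cast
        linear_combination (-2*(Real.pi:ℂ)*Complex.I) * hcn
      rw [show ((t + n : ℝ) : ℂ) = (t:ℂ) + (n:ℂ) from by push_cast; ring, hexp,
        Complex.exp_add, Complex.exp_int_mul_two_pi_mul_I, mul_one]
    set S := ∫ t in (0:ℝ)..n, g t with hSdef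
    have hSM : ∀ M : ℕ, (∫ t in (0:ℝ)..(M*n), g t) = (M:ℂ) * S := by
      intro M
      have h := hgper.intervalIntegral_add_zsmul_eq (M:ℤ) 0 hgint
      rw [zero_add, zero_add] at h
      rw [show ((M:ℕ):ℝ) * n = ((M:ℤ) • n : ℝ) from by push_cast [zsmul_eq_mul]; ring, h]
      push_cast [zsmul_eq_mul]
      ring
    set C : ℝ := (1/(Real.pi*d)) * ((μ₁ Set.univ).toReal + (μ₂ Set.univ).toReal
        + (μ₃ Set.univ).toReal + (μ₄ Set.univ).toReal) with hC
    have hbound : ∀ T : ℝ, 0 ≤ T → ‖∫ t in (0:ℝ)..T, g t‖ ≤ C := by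
      intro T hT
      set G₁ : ℝ → ℂ := fun t => (∫ x, Complex.exp (-2 * Real.pi * Complex.I * x * t) ∂μ₁)
        * Complex.exp (-2 * Real.pi * Complex.I * c * t) with hG1
      set G₂ : ℝ → ℂ := fun t => (∫ x, Complex.exp (-2 * Real.pi * Complex.I * x * t) ∂μ₂)
        * Complex.exp (-2 * Real.pi * Complex.I * c * t) with hG2
      set G₃ : ℝ → ℂ := fun t => (∫ x, Complex.exp (-2 * Real.pi * Complex.I * x * t) ∂μ₃)
        * Complex.exp (-2 * Real.pi * Complex.I * c * t) with hG3
      set G₄ : ℝ → ℂ := fun t => (∫ x, Complex.exp (-2 * Real.pi * Complex.I * x * t) ∂μ₄)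
        * Complex.exp (-2 * Real.pi * Complex.I * c * t) with hG4
      have hgsplit : Set.EqOn g
          (fun t => (G₁ t - G₂ t) + (Complex.I * G₃ t - Complex.I * G₄ t))
          (Set.uIcc 0 T) := by
        intro t _
        show f t * Complex.exp (-2 * Real.pi * Complex.I * c * t) = _
        rw [hf t]
        simp only [complexMeasureIntegral, hG1, hG2, hG3, hG4]
        ring
      rw [intervalIntegral.integral_congr hgsplit]
      have i1 : IntervalIntegrable G₁ volume 0 T :=
        (((aux_cont μ₁).mul (by fun_prop)).intervalIntegrable 0 T)
      have i2 : IntervalIntegrable G₂ volume 0 T :=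
        (((aux_cont μ₂).mul (by fun_prop)).intervalIntegrable 0 T)
      have i3 : IntervalIntegrable G₃ volume 0 T :=
        (((aux_cont μ₃).mul (by fun_prop)).intervalIntegrable 0 T)
      have i4 : IntervalIntegrable G₄ volume 0 T :=
        (((aux_cont μ₄).mul (by fun_prop)).intervalIntegrable 0 T)
      rw [intervalIntegral.integral_add (i1.sub i2)
          ((i3.const_mul Complex.I).sub (i4.const_mul Complex.I)),
        intervalIntegral.integral_sub i1 i2,
        intervalIntegral.integral_sub (i3.const_mul Complex.I) (i4.const_mul Complex.I),
        intervalIntegral.integral_const_mul, intervalIntegral.integral_const_mul]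
      have b1 := aux_bound μ₁ σ hsupp₁ c d hd hdist T hT
      have b2 := aux_bound μ₂ σ hsupp₂ c d hd hdist T hT
      have b3 := aux_bound μ₃ σ hsupp₃ c d hd hdist T hT
      have b4 := aux_bound μ₄ σ hsupp₄ c d hd hdist T hT
      have e3 : ‖Complex.I * ∫ t in (0:ℝ)..T, G₃ t‖ = ‖∫ t in (0:ℝ)..T, G₃ t‖ := by
        rw [norm_mul, Complex.norm_I, one_mul]
      have e4 : ‖Complex.I * ∫ t in (0:ℝ)..T, G₄ t‖ = ‖∫ t in (0:ℝ)..T, G₄ t‖ := by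
        rw [norm_mul, Complex.norm_I, one_mul]
      calc ‖((∫ t in (0:ℝ)..T, G₁ t) - (∫ t in (0:ℝ)..T, G₂ t))
            + ((Complex.I * (∫ t in (0:ℝ)..T, G₃ t)) - Complex.I * (∫ t in (0:ℝ)..T, G₄ t))‖
          ≤ ‖(∫ t in (0:ℝ)..T, G₁ t) - (∫ t in (0:ℝ)..T, G₂ t)‖
            + ‖(Complex.I * (∫ t in (0:ℝ)..T, G₃ t)) - Complex.I * (∫ t in (0:ℝ)..T, G₄ t)‖ :=
          norm_add_le _ _
        _ ≤ (‖(∫ t in (0:ℝ)..T, G₁ t)‖ + ‖(∫ t in (0:ℝ)..T, G₂ t)‖)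
            + (‖Complex.I * (∫ t in (0:ℝ)..T, G₃ t)‖ + ‖Complex.I * (∫ t in (0:ℝ)..T, G₄ t)‖) :=
          add_le_add (norm_sub_le _ _) (norm_sub_le _ _)
        _ ≤ C := by
          rw [e3, e4, hC]
          simp only [hG1, hG2, hG3, hG4] at *
          linarith [b1, b2, b3, b4]
    have hS0 : S = 0 := by
      by_contra hS0
      have hpos : 0 < ‖S‖ := norm_pos_iff.2 hS0
      obtain ⟨M, hM⟩ := exists_nat_gt (C / ‖S‖)
      have hMb := hbound ((M:ℝ)*n) (by positivity)
      rw [hSM M, norm_mul, Complex.norm_natCast] at hMb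
      rw [div_lt_iff₀ hpos] at hM
      linarith
    rw [hcoeff k]
    have hSS : (∫ t in (0:ℝ)..n, f t * Complex.exp (-2 * Real.pi * Complex.I * k * t / n)) = S := by
      rw [hSdef]
      apply intervalIntegral.integral_congr
      intro t _
      show f t * Complex.exp (-2 * Real.pi * Complex.I * k * t / n)
        = f t * Complex.exp (-2 * Real.pi * Complex.I * c * t)
      congr 1
      rw [show ((c:ℝ):ℂ) = (k:ℂ)/(n:ℂ) from by rw [hc]; push_cast; ring]
      ring
    rw [hSS, hS0, mul_zero]
  intro ξ
  have hsummable : Summable (fun k => fourierCoeff (⇑F) k) :=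
    summable_of_ne_finset_zero hvanish
  have h1 := has_pointwise_sum_fourier_series_of_summable hsummable (ξ : AddCircle n)
  have h2 : HasSum (fun k : ℤ => fourierCoeff (⇑F) k • fourier k (ξ : AddCircle n))
      (∑ k ∈ Finset.Icc (-⌊σ * n⌋) ⌊σ * n⌋, fourierCoeff (⇑F) k • fourier k (ξ : AddCircle n)) :=
    hasSum_sum_of_ne_finset_zero (fun k hk => by rw [hvanish k hk, zero_smul])
  have h3 := h1.unique h2
  rw [show f ξ = F (ξ : AddCircle n) from (hFcoe ξ).symm, h3]
  apply Finset.sum_congr rfl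
  intro k _
  rw [hcoeff k, smul_eq_mul, fourier_coe_apply]
end

section
/- Let 𝒯, Ω > 0, let N₁, N₂ ∈ ℕ, and set L₁ = 2N₁ + 1, L₂ = 2N₂ + 1. Let w(x) = Σ_{k = −N₁}^{N₁} w_k e^{2πi Ω k x / L₁} be an (L₁/Ω)-periodic trigonometric polynomial with coefficients w_k ∈ ℂ. Then for all τ, ν ∈ ℝ and all sample points x_j = 𝒯 j / L₂ with j = −N₂, …, N₂, one has e^{2πi ν x_j} w(x_j − τ) = Σ_{u = −N₁}^{N₁} Σ_{v = −N₂}^{N₂} e^{2πi x_j v / 𝒯} · w(x_j − u/Ω) · (1/(L₁ L₂)) · D_{N₁}((u − Ω τ)/L₁) · D_{N₂}((v − 𝒯 ν)/L₂). -/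
/-- The `N`-th Dirichlet kernel `D_N(x) = Σ_{k = −N}^{N} e^{2πi k x}`. -/
noncomputable def dirichletKernel (N : ℕ) (x : ℝ) : ℂ :=
  ∑ k ∈ Finset.Icc (-(N : ℤ)) (N : ℤ), Complex.exp (2 * Real.pi * Complex.I * k * x)

open Complex Finset in
lemma geom_zero (N : ℕ) (r : ℤ) (hr : r ≠ 0) (habs : r.natAbs ≤ 2*N) :
    ∑ u ∈ Finset.Icc (-(N:ℤ)) N, Complex.exp (2*Real.pi*Complex.I*r*u/(2*N+1)) = 0 := by
  set ζ : ℂ := Complex.exp (2*Real.pi*Complex.I*r/(2*N+1)) with hζ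
  have hζ0 : ζ ≠ 0 := Complex.exp_ne_zero _
  have h1 : (2*(N:ℂ)+1) ≠ 0 := by
    have : ((2*N+1 : ℕ):ℂ) ≠ 0 := Nat.cast_ne_zero.mpr (by omega)
    push_cast at this; exact this
  have hpi : (Real.pi : ℂ) ≠ 0 := by exact_mod_cast Real.pi_ne_zero
  have hterm : ∀ u : ℤ, Complex.exp (2*Real.pi*Complex.I*r*u/(2*N+1)) = ζ ^ u := by
    intro u
    rw [hζ, ← Complex.exp_int_mul]
    congr 1
    field_simp
  have hζL : ζ ^ ((2*N+1 : ℕ)) = 1 := by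
    rw [hζ, ← Complex.exp_nat_mul, Complex.exp_eq_one_iff]
    refine ⟨r, ?_⟩
    push_cast
    field_simp
  have hζ1 : ζ ≠ 1 := by
    intro h
    rw [hζ, Complex.exp_eq_one_iff] at h
    obtain ⟨n, hn⟩ := h
    have h2 : (2*(Real.pi:ℂ)*Complex.I) ≠ 0 := by simp [hpi, Complex.I_ne_zero]
    have hrc : (r:ℂ) = n*(2*(N:ℂ)+1) := by
      field_simp at hn
      apply mul_left_cancel₀ h2
      linear_combination (2*(Real.pi:ℂ)*Complex.I) * hn
    have hr2 : r = n * (2*(N:ℤ)+1) := by exact_mod_cast hrc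
    rcases eq_or_ne n 0 with h0 | h0
    · simp [h0] at hr2; exact hr hr2
    · have habs2 : (2*(N:ℤ)+1) ≤ |r| := by
        rw [hr2, abs_mul]
        calc (2*(N:ℤ)+1) = 1 * (2*N+1) := by ring
        _ ≤ |n| * |(2*(N:ℤ)+1)| := by
            exact mul_le_mul (Int.one_le_abs h0) (le_abs_self _) (by omega) (abs_nonneg n)
      rw [Int.abs_eq_natAbs] at habs2
      omega
  calc ∑ u ∈ Finset.Icc (-(N:ℤ)) N, Complex.exp (2*Real.pi*Complex.I*r*u/(2*N+1))
      = ∑ u ∈ Finset.Icc (-(N:ℤ)) N, ζ ^ u := Finset.sum_congr rfl (fun u _ => hterm u)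
    _ = ∑ i ∈ Finset.range (2*N+1), ζ ^ ((i : ℤ) - N) := by
        refine Finset.sum_nbij' (i := fun u : ℤ => (u + N).toNat) (j := fun i : ℕ => (i : ℤ) - N) ?_ ?_ ?_ ?_ ?_
        all_goals intro a ha; simp at ha ⊢
        all_goals first | omega | (congr 1; omega)
    _ = ζ ^ (-(N:ℤ)) * ∑ i ∈ Finset.range (2*N+1), ζ ^ i := by
        rw [Finset.mul_sum]
        refine Finset.sum_congr rfl (fun i _ => ?_)
        rw [← zpow_natCast ζ i, ← zpow_add₀ hζ0]
        congr 1; ring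
    _ = 0 := by
        rw [geom_sum_eq hζ1]
        simp [hζL]

open Complex Finset in
lemma orth (N : ℕ) (r : ℤ) (habs : r.natAbs ≤ 2*N) :
    ∑ u ∈ Finset.Icc (-(N:ℤ)) N, Complex.exp (2*Real.pi*Complex.I*r*u/(2*N+1))
      = if r = 0 then (2*(N:ℂ)+1) else 0 := by
  rcases eq_or_ne r 0 with h | h
  · subst h
    simp only [if_pos rfl]
    have h1 : ∀ u ∈ Finset.Icc (-(N:ℤ)) N,
        Complex.exp (2*Real.pi*Complex.I*((0:ℤ):ℂ)*u/(2*N+1)) = 1 := by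
      intro u _; simp
    rw [Finset.sum_congr rfl h1, Finset.sum_const, Int.card_Icc]
    have h2 : ((N:ℤ) + 1 - -N).toNat = 2*N+1 := by omega
    rw [h2]
    push_cast; ring
  · rw [if_neg h]; exact geom_zero N r h habs

lemma key (N : ℕ) (k : ℤ) (hk : k.natAbs ≤ N) (a : ℝ) :
    ∑ u ∈ Finset.Icc (-(N:ℤ)) N,
      Complex.exp (2*Real.pi*Complex.I*k*u/(2*N+1)) *
        ((1/(2*(N:ℂ)+1)) * dirichletKernel N (((u:ℝ) - a)/(2*N+1)))
      = Complex.exp (2*Real.pi*Complex.I*k*a/(2*N+1)) := by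
  have hL : (2*(N:ℂ)+1) ≠ 0 := by
    have : ((2*N+1 : ℕ):ℂ) ≠ 0 := Nat.cast_ne_zero.mpr (by omega)
    push_cast at this; exact this
  unfold dirichletKernel
  calc ∑ u ∈ Finset.Icc (-(N:ℤ)) N,
      Complex.exp (2*Real.pi*Complex.I*k*u/(2*N+1)) *
        ((1/(2*(N:ℂ)+1)) * ∑ m ∈ Finset.Icc (-(N:ℤ)) N,
          Complex.exp (2*Real.pi*Complex.I*m*((((u:ℝ) - a)/(2*N+1) : ℝ) : ℂ)))
      = ∑ u ∈ Finset.Icc (-(N:ℤ)) N, ∑ m ∈ Finset.Icc (-(N:ℤ)) N,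
          (1/(2*(N:ℂ)+1)) * Complex.exp (2*Real.pi*Complex.I*m*(-a)/(2*N+1)) *
            Complex.exp (2*Real.pi*Complex.I*(((k+m : ℤ)):ℂ)*u/(2*N+1)) := by
        refine Finset.sum_congr rfl fun u _ => ?_
        rw [Finset.mul_sum, Finset.mul_sum]
        refine Finset.sum_congr rfl fun m _ => ?_
        trans ((1/(2*(N:ℂ)+1)) * Complex.exp
          (2*Real.pi*Complex.I*m*((((u:ℝ) - a)/(2*N+1) : ℝ) : ℂ) + 2*Real.pi*Complex.I*k*u/(2*N+1)))
        · rw [Complex.exp_add]; ring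
        · rw [mul_assoc ((1:ℂ)/(2*(N:ℂ)+1)), ← Complex.exp_add]
          congr 2
          push_cast
          field_simp
          ring
    _ = ∑ m ∈ Finset.Icc (-(N:ℤ)) N,
          (1/(2*(N:ℂ)+1)) * Complex.exp (2*Real.pi*Complex.I*m*(-a)/(2*N+1)) *
            ∑ u ∈ Finset.Icc (-(N:ℤ)) N, Complex.exp (2*Real.pi*Complex.I*(((k+m : ℤ)):ℂ)*u/(2*N+1)) := by
        rw [Finset.sum_comm]
        exact Finset.sum_congr rfl fun m _ => (Finset.mul_sum _ _ _).symm
    _ = ∑ m ∈ Finset.Icc (-(N:ℤ)) N,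
          (1/(2*(N:ℂ)+1)) * Complex.exp (2*Real.pi*Complex.I*m*(-a)/(2*N+1)) *
            (if k + m = 0 then (2*(N:ℂ)+1) else 0) := by
        refine Finset.sum_congr rfl fun m hm => ?_
        simp only [Finset.mem_Icc] at hm
        rw [orth N (k+m) (by omega)]
    _ = Complex.exp (2*Real.pi*Complex.I*k*a/(2*N+1)) := by
        rw [Finset.sum_eq_single (-k)]
        · simp only [if_pos (by ring : k + -k = 0)]
          rw [div_mul_eq_mul_div, one_mul, mul_comm, mul_div_assoc, mul_comm,
            div_mul_cancel₀ _ hL]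
          congr 1
          push_cast
          ring
        · intro m _ hm
          rw [if_neg (by omega), mul_zero]
        · intro h
          exfalso; apply h
          simp only [Finset.mem_Icc]; omega

open Complex Finset in
lemma key' (N : ℕ) (k : ℤ) (hk : k.natAbs ≤ N) (a : ℝ) :
    ∑ u ∈ Finset.Icc (-(N:ℤ)) N,
      Complex.exp (2*Real.pi*Complex.I*k*u/((2*N+1:ℕ):ℂ)) *
        ((1/((2*N+1:ℕ):ℂ)) * dirichletKernel N (((u:ℝ) - a)/((2*N+1:ℕ):ℝ)))
      = Complex.exp (2*Real.pi*Complex.I*k*a/((2*N+1:ℕ):ℂ)) := by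
  push_cast
  exact key N k hk a

/-- **Sampling formula for a single translation-modulation applied to a trigonometric
polynomial.**  Let `𝒯, Ω > 0`, `N₁, N₂ ∈ ℕ`, `L₁ = 2N₁+1`, `L₂ = 2N₂+1`, and let
`w(x) = Σ_{k=−N₁}^{N₁} w_k e^{2πi Ω k x / L₁}`.  Then for all `τ, ν ∈ ℝ` and all sample
points `x_j = 𝒯 j / L₂` with `j = −N₂, …, N₂`,
`e^{2πi ν x_j} w(x_j − τ) = Σ_{u=−N₁}^{N₁} Σ_{v=−N₂}^{N₂} e^{2πi x_j v / 𝒯} ·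
  w(x_j − u/Ω) · (1/(L₁ L₂)) · D_{N₁}((u − Ω τ)/L₁) · D_{N₂}((v − 𝒯 ν)/L₂)`. -/
theorem sampling_formula_translation_modulation
    (𝒯 Ω : ℝ) (h𝒯 : 0 < 𝒯) (hΩ : 0 < Ω) (N₁ N₂ : ℕ)
    (L₁ L₂ : ℕ) (hL₁ : L₁ = 2 * N₁ + 1) (hL₂ : L₂ = 2 * N₂ + 1)
    (wc : ℤ → ℂ) (w : ℝ → ℂ)
    (hw : ∀ x : ℝ, w x = ∑ k ∈ Finset.Icc (-(N₁ : ℤ)) (N₁ : ℤ),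
      wc k * Complex.exp (2 * Real.pi * Complex.I * Ω * k * x / L₁))
    (τ ν : ℝ) :
    ∀ j ∈ Finset.Icc (-(N₂ : ℤ)) (N₂ : ℤ),
      Complex.exp (2 * Real.pi * Complex.I * ν * (𝒯 * j / L₂)) * w (𝒯 * j / L₂ - τ) =
        ∑ u ∈ Finset.Icc (-(N₁ : ℤ)) (N₁ : ℤ), ∑ v ∈ Finset.Icc (-(N₂ : ℤ)) (N₂ : ℤ),
          Complex.exp (2 * Real.pi * Complex.I * (𝒯 * j / L₂) * v / 𝒯) *
            w (𝒯 * j / L₂ - u / Ω) *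
            ((1 / ((L₁ : ℂ) * (L₂ : ℂ))) *
              dirichletKernel N₁ ((u - Ω * τ) / L₁) *
              dirichletKernel N₂ ((v - 𝒯 * ν) / L₂)) := by
  intro j hj
  rw [Finset.mem_Icc] at hj
  subst hL₁ hL₂
  have h𝒯' : (𝒯:ℂ) ≠ 0 := by exact_mod_cast h𝒯.ne'
  have hΩ' : (Ω:ℝ) ≠ 0 := hΩ.ne'
  have hΩc : (Ω:ℂ) ≠ 0 := by exact_mod_cast hΩ.ne'
  have hL₂c : ((2*N₂+1:ℕ):ℂ) ≠ 0 := Nat.cast_ne_zero.mpr (by omega)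
  have hL₁c' : (2*(N₁:ℂ)+1) ≠ 0 := by
    have : ((2*N₁+1:ℕ):ℂ) ≠ 0 := Nat.cast_ne_zero.mpr (by omega)
    push_cast at this; exact this
  have hL₂c' : (2*(N₂:ℂ)+1) ≠ 0 := by
    have := hL₂c; push_cast at this; exact this
  set x : ℝ := 𝒯 * (j:ℝ) / ((2*N₂+1:ℕ):ℝ) with hx
  -- Part B : translation
  have hB : ∑ u ∈ Finset.Icc (-(N₁:ℤ)) (N₁:ℤ),
      w (x - (u:ℝ)/Ω) * ((1/((2*N₁+1:ℕ):ℂ)) *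
        dirichletKernel N₁ (((u:ℝ) - Ω*τ)/((2*N₁+1:ℕ):ℝ))) = w (x - τ) := by
    simp only [hw]
    simp only [Finset.sum_mul]
    rw [Finset.sum_comm]
    refine Finset.sum_congr rfl fun k hk => ?_
    rw [Finset.mem_Icc] at hk
    have hkey := key' N₁ (-k) (by omega) (Ω*τ)
    calc ∑ u ∈ Finset.Icc (-(N₁:ℤ)) (N₁:ℤ),
        wc k * Complex.exp (2*Real.pi*Complex.I*Ω*k*((x - (u:ℝ)/Ω : ℝ):ℂ)/((2*N₁+1:ℕ):ℂ)) *
          ((1/((2*N₁+1:ℕ):ℂ)) * dirichletKernel N₁ (((u:ℝ) - Ω*τ)/((2*N₁+1:ℕ):ℝ)))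
        = ∑ u ∈ Finset.Icc (-(N₁:ℤ)) (N₁:ℤ),
          (wc k * Complex.exp (2*Real.pi*Complex.I*Ω*k*(x:ℂ)/((2*N₁+1:ℕ):ℂ))) *
            (Complex.exp (2*Real.pi*Complex.I*((-k : ℤ):ℂ)*u/((2*N₁+1:ℕ):ℂ)) *
              ((1/((2*N₁+1:ℕ):ℂ)) * dirichletKernel N₁ (((u:ℝ) - Ω*τ)/((2*N₁+1:ℕ):ℝ)))) := by
          refine Finset.sum_congr rfl fun u _ => ?_
          have he : Complex.exp (2*Real.pi*Complex.I*Ω*k*((x - (u:ℝ)/Ω : ℝ):ℂ)/((2*N₁+1:ℕ):ℂ))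
              = Complex.exp (2*Real.pi*Complex.I*Ω*k*(x:ℂ)/((2*N₁+1:ℕ):ℂ)) *
                Complex.exp (2*Real.pi*Complex.I*((-k : ℤ):ℂ)*u/((2*N₁+1:ℕ):ℂ)) := by
            rw [← Complex.exp_add]
            congr 1
            push_cast
            field_simp [hΩc, hL₁c']
            ring
          rw [he]; ring
      _ = (wc k * Complex.exp (2*Real.pi*Complex.I*Ω*k*(x:ℂ)/((2*N₁+1:ℕ):ℂ))) *
            ∑ u ∈ Finset.Icc (-(N₁:ℤ)) (N₁:ℤ),
              Complex.exp (2*Real.pi*Complex.I*((-k : ℤ):ℂ)*u/((2*N₁+1:ℕ):ℂ)) *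
                ((1/((2*N₁+1:ℕ):ℂ)) * dirichletKernel N₁ (((u:ℝ) - Ω*τ)/((2*N₁+1:ℕ):ℝ))) :=
          (Finset.mul_sum _ _ _).symm
      _ = wc k * Complex.exp (2*Real.pi*Complex.I*Ω*k*((x - τ : ℝ):ℂ)/((2*N₁+1:ℕ):ℂ)) := by
          rw [hkey, mul_assoc, ← Complex.exp_add]
          congr 2
          push_cast
          ring
  -- Part A : modulation
  have hA : ∑ v ∈ Finset.Icc (-(N₂:ℤ)) (N₂:ℤ),
      Complex.exp (2*Real.pi*Complex.I*(x:ℂ)*v/(𝒯:ℂ)) * ((1/((2*N₂+1:ℕ):ℂ)) *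
        dirichletKernel N₂ (((v:ℝ) - 𝒯*ν)/((2*N₂+1:ℕ):ℝ)))
      = Complex.exp (2*Real.pi*Complex.I*(ν:ℂ)*(x:ℂ)) := by
    have hkey := key' N₂ j (by omega) (𝒯*ν)
    calc ∑ v ∈ Finset.Icc (-(N₂:ℤ)) (N₂:ℤ),
        Complex.exp (2*Real.pi*Complex.I*(x:ℂ)*v/(𝒯:ℂ)) * ((1/((2*N₂+1:ℕ):ℂ)) *
          dirichletKernel N₂ (((v:ℝ) - 𝒯*ν)/((2*N₂+1:ℕ):ℝ)))
        = ∑ v ∈ Finset.Icc (-(N₂:ℤ)) (N₂:ℤ),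
          Complex.exp (2*Real.pi*Complex.I*(j:ℂ)*v/((2*N₂+1:ℕ):ℂ)) * ((1/((2*N₂+1:ℕ):ℂ)) *
            dirichletKernel N₂ (((v:ℝ) - 𝒯*ν)/((2*N₂+1:ℕ):ℝ))) := by
          refine Finset.sum_congr rfl fun v _ => ?_
          congr 2
          rw [hx]
          push_cast
          field_simp [h𝒯', hL₂c']
      _ = Complex.exp (2*Real.pi*Complex.I*(j:ℂ)*(𝒯*ν : ℝ)/((2*N₂+1:ℕ):ℂ)) := hkey
      _ = Complex.exp (2*Real.pi*Complex.I*(ν:ℂ)*(x:ℂ)) := by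
          congr 1
          rw [hx]
          push_cast
          have hL₂' : ((2*N₂+1:ℕ):ℂ) ≠ 0 := Nat.cast_ne_zero.mpr (by omega)
          push_cast at hL₂'
          field_simp
  -- Assemble
  calc Complex.exp (2*Real.pi*Complex.I*(ν:ℂ)*((𝒯:ℂ)*(j:ℂ)/((2*N₂+1:ℕ):ℂ))) * w (x - τ)
      = w (x - τ) * Complex.exp (2*Real.pi*Complex.I*(ν:ℂ)*(x:ℂ)) := by
        rw [mul_comm]
        congr 2
        rw [hx]; push_cast; ring
    _ = (∑ u ∈ Finset.Icc (-(N₁:ℤ)) (N₁:ℤ),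
          w (x - (u:ℝ)/Ω) * ((1/((2*N₁+1:ℕ):ℂ)) *
            dirichletKernel N₁ (((u:ℝ) - Ω*τ)/((2*N₁+1:ℕ):ℝ)))) *
        (∑ v ∈ Finset.Icc (-(N₂:ℤ)) (N₂:ℤ),
          Complex.exp (2*Real.pi*Complex.I*(x:ℂ)*v/(𝒯:ℂ)) * ((1/((2*N₂+1:ℕ):ℂ)) *
            dirichletKernel N₂ (((v:ℝ) - 𝒯*ν)/((2*N₂+1:ℕ):ℝ)))) := by
        rw [hB, hA]
    _ = ∑ u ∈ Finset.Icc (-(N₁:ℤ)) (N₁:ℤ), ∑ v ∈ Finset.Icc (-(N₂:ℤ)) (N₂:ℤ),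
          Complex.exp (2*Real.pi*Complex.I*((𝒯:ℂ)*(j:ℂ)/((2*N₂+1:ℕ):ℂ))*v/(𝒯:ℂ)) *
            w (x - (u:ℝ)/Ω) *
            ((1 / (((2*N₁+1:ℕ):ℂ) * ((2*N₂+1:ℕ):ℂ))) *
              dirichletKernel N₁ (((u:ℝ) - Ω*τ)/((2*N₁+1:ℕ):ℝ)) *
              dirichletKernel N₂ (((v:ℝ) - 𝒯*ν)/((2*N₂+1:ℕ):ℝ))) := by
        rw [Finset.sum_mul_sum]
        refine Finset.sum_congr rfl fun u _ => Finset.sum_congr rfl fun v _ => ?_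
        have hxc : ((x:ℝ):ℂ) = (𝒯:ℂ)*(j:ℂ)/((2*N₂+1:ℕ):ℂ) := by rw [hx]; push_cast; ring
        rw [hxc]
        simp only [one_div, mul_inv]
        ring
end

section
/- Let 𝒯, Ω > 0, let N₁, N₂ ∈ ℕ, set L₁ = 2N₁ + 1, L₂ = 2N₂ + 1, and let w(x) = Σ_{k = −N₁}^{N₁} w_k e^{2πi Ω k x / L₁} with w_k ∈ ℂ. Let H = Σ_{s=1}^{S} η_s M_{ν_s} T_{τ_s} with η_s ∈ ℂ and τ_s, ν_s ∈ ℝ. Then for every j = −N₂, …, N₂ and x_j = 𝒯 j / L₂, the sample H w(x_j) = Σ_{s=1}^S η_s e^{2πi ν_s x_j} w(x_j − τ_s) satisfies H w(x_j) = Σ_{u = −N₁}^{N₁} Σ_{v = −N₂}^{N₂} e^{2πi x_j v / 𝒯} · w(x_j − u/Ω) · Σ_{s=1}^{S} η_s · (1/(L₁ L₂)) · D_{N₁}((u − Ω τ_s)/L₁) · D_{N₂}((v − 𝒯 ν_s)/L₂). -/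
open Finset Complex

lemma sum_exp_orth (N : ℕ) (n : ℤ) (hn : n.natAbs ≤ 2*N) :
    ∑ u ∈ Finset.Icc (-(N:ℤ)) (N:ℤ), Complex.exp (2*Real.pi*Complex.I*n*u/(2*N+1)) =
      if n = 0 then ((2*N+1 : ℕ) : ℂ) else 0 := by
  rcases eq_or_ne n 0 with rfl | hn0
  · simp only [if_pos rfl]
    have hc : (Finset.Icc (-(N:ℤ)) (N:ℤ)).card = 2*N+1 := by
      rw [Int.card_Icc]; omega
    simp only [Int.cast_natCast, mul_zero, zero_mul, mul_div_assoc]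
    simp [hc]
  · simp only [hn0, if_false]
    have hmap : Finset.Icc (-(N:ℤ)) (N:ℤ) =
        Finset.map ⟨fun t : ℕ => (t:ℤ) - N, @id (Function.Injective fun t : ℕ => (t:ℤ) - N) (by intro a b h; simp only at h; omega)⟩ (Finset.range (2*N+1)) := by
      ext x
      simp only [Finset.mem_Icc, Finset.mem_map, Finset.mem_range, Function.Embedding.coeFn_mk]
      constructor
      · intro h; exact ⟨(x + N).toNat, by omega, by omega⟩
      · rintro ⟨t, ht, rfl⟩; omega
    rw [hmap, Finset.sum_map]
    simp only [Function.Embedding.coeFn_mk]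
    have hz : ∀ t ∈ Finset.range (2*N+1),
        Complex.exp (2*Real.pi*Complex.I*n*((t:ℤ)-N:ℤ)/(2*N+1)) =
        Complex.exp (2*Real.pi*Complex.I*n/(2*N+1))^t * Complex.exp (-(2*Real.pi*Complex.I*n*N/(2*N+1))) := by
      intro t _
      rw [← Complex.exp_nat_mul, ← Complex.exp_add]
      congr 1
      push_cast
      ring
    rw [Finset.sum_congr rfl hz, ← Finset.sum_mul]
    have hL : ((2*N+1 : ℕ) : ℂ) ≠ 0 := by exact_mod_cast (Nat.succ_ne_zero (2*N))
    have hLR : ((2:ℂ)*N+1) ≠ 0 := by push_cast at hL ⊢; exact hL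
    have hne1 : Complex.exp (2*Real.pi*Complex.I*n/(2*N+1)) ≠ 1 := by
      intro h
      rw [Complex.exp_eq_one_iff] at h
      obtain ⟨m, hm⟩ := h
      have hpi2 : (2*(Real.pi:ℂ)*Complex.I) ≠ 0 :=
        mul_ne_zero (mul_ne_zero two_ne_zero (by exact_mod_cast Real.pi_ne_zero)) Complex.I_ne_zero
      have h2 : (n : ℂ) = m * (2*N+1) := by
        have heq : (2*(Real.pi:ℂ)*Complex.I) * n = (2*(Real.pi:ℂ)*Complex.I) * (m*(2*N+1)) := by
          rw [div_eq_iff hLR] at hm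
          linear_combination hm
        exact mul_left_cancel₀ hpi2 heq
      have h3 : n = m * (2*N+1) := by exact_mod_cast h2
      rcases eq_or_ne m 0 with rfl | hm0
      · simp at h3; omega
      · have h1m : 1 ≤ |m| := Int.one_le_abs hm0
        have habs : (2*(N:ℤ)+1) ≤ |n| := by
          rw [h3, abs_mul, abs_of_nonneg (by positivity : (0:ℤ) ≤ 2*(N:ℤ)+1)]
          nlinarith
        rw [Int.abs_eq_natAbs] at habs
        omega
    rw [geom_sum_eq hne1]
    have hpow : Complex.exp (2*Real.pi*Complex.I*n/(2*N+1))^(2*N+1) = 1 := by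
      rw [← Complex.exp_nat_mul]
      have : ((2*N+1:ℕ):ℂ) * (2*Real.pi*Complex.I*n/(2*N+1)) = n * (2*Real.pi*Complex.I) := by
        push_cast
        field_simp
      rw [this]
      exact_mod_cast Complex.exp_int_mul_two_pi_mul_I n
    rw [hpow]
    simp

lemma key_orth (N : ℕ) {k : ℤ} (hk : k ∈ Finset.Icc (-(N:ℤ)) (N:ℤ)) (a : ℝ) :
    ∑ u ∈ Finset.Icc (-(N:ℤ)) (N:ℤ),
      Complex.exp (2*Real.pi*Complex.I*k*u/(2*N+1)) * dirichletKernel N ((u - a)/(2*N+1))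
    = ((2*N+1:ℕ):ℂ) * Complex.exp (2*Real.pi*Complex.I*k*a/(2*N+1)) := by
  simp only [Finset.mem_Icc] at hk
  unfold dirichletKernel
  push_cast
  have step : ∀ u ∈ Finset.Icc (-(N:ℤ)) (N:ℤ),
      Complex.exp (2*Real.pi*Complex.I*k*u/(2*N+1)) *
        ∑ m ∈ Finset.Icc (-(N:ℤ)) (N:ℤ), Complex.exp (2*Real.pi*Complex.I*m*(((u:ℂ) - (a:ℂ))/(2*(N:ℂ)+1)))
      = ∑ m ∈ Finset.Icc (-(N:ℤ)) (N:ℤ),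
          Complex.exp (-(2*Real.pi*Complex.I*m*a/(2*N+1))) *
          Complex.exp (2*Real.pi*Complex.I*(k+m)*u/(2*N+1)) := by
    intro u _
    rw [Finset.mul_sum]
    refine Finset.sum_congr rfl fun m _ => ?_
    rw [← Complex.exp_add, ← Complex.exp_add]
    congr 1
    have hLR : ((2:ℂ)*N+1) ≠ 0 := by
      have : ((2*N+1 : ℕ) : ℂ) ≠ 0 := by exact_mod_cast (Nat.succ_ne_zero (2*N))
      push_cast at this; exact this
    push_cast
    field_simp
    ring
  rw [Finset.sum_congr rfl step, Finset.sum_comm]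
  have inner : ∀ m ∈ Finset.Icc (-(N:ℤ)) (N:ℤ),
      (∑ u ∈ Finset.Icc (-(N:ℤ)) (N:ℤ),
        Complex.exp (-(2*Real.pi*Complex.I*m*a/(2*N+1))) *
        Complex.exp (2*Real.pi*Complex.I*(k+m)*u/(2*N+1)))
      = Complex.exp (-(2*Real.pi*Complex.I*m*a/(2*N+1))) *
          (if k+m = 0 then ((2*N+1:ℕ):ℂ) else 0) := by
    intro m hm
    simp only [Finset.mem_Icc] at hm
    rw [← Finset.mul_sum]
    congr 1
    have h1 : ∀ u : ℤ, (2*(Real.pi:ℂ)*Complex.I*((k:ℂ)+(m:ℂ))*(u:ℂ)/(2*(N:ℂ)+1))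
        = (2*(Real.pi:ℂ)*Complex.I*((k+m:ℤ):ℂ)*(u:ℂ)/(2*(N:ℂ)+1)) := by
      intro u; push_cast; ring
    simp only [h1]
    exact sum_exp_orth N (k+m) (by omega)
  rw [Finset.sum_congr rfl inner]
  rw [Finset.sum_eq_single (-k)]
  · simp only [add_neg_cancel, neg_neg]  -- k + (-k) = 0
    push_cast
    ring_nf
  · intro m _ hm
    rw [if_neg (by omega), mul_zero]
  · intro h
    exact absurd (Finset.mem_Icc.mpr ⟨by omega, by omega⟩) h

lemma keyU (N : ℕ) (Ω : ℝ) (hΩ : Ω ≠ 0) (wc : ℤ → ℂ) (w : ℝ → ℂ)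
    (hw : ∀ x : ℝ, w x = ∑ k ∈ Finset.Icc (-(N:ℤ)) (N:ℤ),
      wc k * Complex.exp (2*Real.pi*Complex.I*Ω*k*x/(2*(N:ℂ)+1)))
    (x b : ℝ) :
    ∑ u ∈ Finset.Icc (-(N:ℤ)) (N:ℤ),
      w (x - u/Ω) * dirichletKernel N ((u - Ω*b)/(2*N+1))
    = ((2*N+1:ℕ):ℂ) * w (x - b) := by
  have hLR : ((2:ℂ)*N+1) ≠ 0 := by
    have : ((2*N+1 : ℕ) : ℂ) ≠ 0 := by exact_mod_cast (Nat.succ_ne_zero (2*N))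
    push_cast at this; exact this
  have hΩ' : (Ω:ℂ) ≠ 0 := by exact_mod_cast hΩ
  calc
    ∑ u ∈ Finset.Icc (-(N:ℤ)) (N:ℤ),
        w (x - u/Ω) * dirichletKernel N ((u - Ω*b)/(2*N+1))
      = ∑ u ∈ Finset.Icc (-(N:ℤ)) (N:ℤ), ∑ k ∈ Finset.Icc (-(N:ℤ)) (N:ℤ),
          (wc k * Complex.exp (2*Real.pi*Complex.I*Ω*k*x/(2*(N:ℂ)+1))) *
          (Complex.exp (2*Real.pi*Complex.I*(-k)*u/(2*N+1)) *
            dirichletKernel N ((u - Ω*b)/(2*N+1))) := by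
        refine Finset.sum_congr rfl fun u _ => ?_
        rw [hw, Finset.sum_mul]
        refine Finset.sum_congr rfl fun k _ => ?_
        push_cast
        rw [show Complex.exp (2*Real.pi*Complex.I*Ω*k*((x:ℂ) - (u:ℂ)/(Ω:ℂ))/(2*(N:ℂ)+1))
            = Complex.exp (2*Real.pi*Complex.I*Ω*k*x/(2*(N:ℂ)+1)) *
              Complex.exp (2*Real.pi*Complex.I*(-k)*u/(2*(N:ℂ)+1)) from by
          rw [← Complex.exp_add]; congr 1; push_cast; field_simp; ring]
        push_cast
        ring
    _ = ∑ k ∈ Finset.Icc (-(N:ℤ)) (N:ℤ),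
          (wc k * Complex.exp (2*Real.pi*Complex.I*Ω*k*x/(2*(N:ℂ)+1))) *
          ∑ u ∈ Finset.Icc (-(N:ℤ)) (N:ℤ),
            Complex.exp (2*Real.pi*Complex.I*(-k)*u/(2*N+1)) *
              dirichletKernel N ((u - Ω*b)/(2*N+1)) := by
        rw [Finset.sum_comm]
        exact Finset.sum_congr rfl fun k _ => (Finset.mul_sum _ _ _).symm
    _ = ∑ k ∈ Finset.Icc (-(N:ℤ)) (N:ℤ),
          (wc k * Complex.exp (2*Real.pi*Complex.I*Ω*k*x/(2*(N:ℂ)+1))) *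
          (((2*N+1:ℕ):ℂ) * Complex.exp (2*Real.pi*Complex.I*(-k)*(Ω*b)/(2*N+1))) := by
        refine Finset.sum_congr rfl fun k hk => ?_
        congr 1
        have hk' : -k ∈ Finset.Icc (-(N:ℤ)) (N:ℤ) := by
          simp only [Finset.mem_Icc] at hk ⊢; omega
        have := key_orth N hk' (Ω*b)
        push_cast at this ⊢
        rw [← this]
    _ = ((2*N+1:ℕ):ℂ) * ∑ k ∈ Finset.Icc (-(N:ℤ)) (N:ℤ),
          wc k * Complex.exp (2*Real.pi*Complex.I*Ω*k*(x-b)/(2*(N:ℂ)+1)) := by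
        rw [Finset.mul_sum]
        refine Finset.sum_congr rfl fun k _ => ?_
        rw [show Complex.exp (2*Real.pi*Complex.I*Ω*k*((x:ℂ)-(b:ℂ))/(2*(N:ℂ)+1))
            = Complex.exp (2*Real.pi*Complex.I*Ω*k*x/(2*(N:ℂ)+1)) *
              Complex.exp (2*Real.pi*Complex.I*(-k)*(Ω*b)/(2*(N:ℂ)+1)) from by
          rw [← Complex.exp_add]; congr 1; push_cast; field_simp; ring]
        ring
    _ = ((2*N+1:ℕ):ℂ) * w (x - b) := by
        rw [hw (x - b)]
        push_cast
        ring_nf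

set_option maxHeartbeats 2000000 in
/-- **Sampling formula for translation-modulation operators.**  Let `𝒯, Ω > 0`,
`N₁, N₂ ∈ ℕ`, `L₁ = 2N₁+1`, `L₂ = 2N₂+1`, let
`w(x) = Σ_{k=−N₁}^{N₁} w_k e^{2πi Ω k x / L₁}`, and let
`H = Σ_{s=1}^{S} η_s M_{ν_s} T_{τ_s}`, acting by
`H w(x) = Σ_s η_s e^{2πi ν_s x} w(x − τ_s)`.  Then for every `j = −N₂, …, N₂` and
`x_j = 𝒯 j / L₂`,
`H w(x_j) = Σ_{u=−N₁}^{N₁} Σ_{v=−N₂}^{N₂} e^{2πi x_j v / 𝒯} · w(x_j − u/Ω) ·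
  Σ_{s=1}^{S} η_s (1/(L₁ L₂)) D_{N₁}((u − Ω τ_s)/L₁) D_{N₂}((v − 𝒯 ν_s)/L₂)`. -/
theorem sampling_formula_channel_operator
    (𝒯 Ω : ℝ) (h𝒯 : 0 < 𝒯) (hΩ : 0 < Ω) (N₁ N₂ : ℕ)
    (L₁ L₂ : ℕ) (hL₁ : L₁ = 2 * N₁ + 1) (hL₂ : L₂ = 2 * N₂ + 1)
    (wc : ℤ → ℂ) (w : ℝ → ℂ)
    (hw : ∀ x : ℝ, w x = ∑ k ∈ Finset.Icc (-(N₁ : ℤ)) (N₁ : ℤ),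
      wc k * Complex.exp (2 * Real.pi * Complex.I * Ω * k * x / L₁))
    (S : ℕ) (η : Fin S → ℂ) (τ ν : Fin S → ℝ) :
    ∀ j ∈ Finset.Icc (-(N₂ : ℤ)) (N₂ : ℤ),
      (∑ s : Fin S, η s * Complex.exp (2 * Real.pi * Complex.I * ν s * (𝒯 * j / L₂)) *
          w (𝒯 * j / L₂ - τ s)) =
        ∑ u ∈ Finset.Icc (-(N₁ : ℤ)) (N₁ : ℤ), ∑ v ∈ Finset.Icc (-(N₂ : ℤ)) (N₂ : ℤ),
          Complex.exp (2 * Real.pi * Complex.I * (𝒯 * j / L₂) * v / 𝒯) *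
            w (𝒯 * j / L₂ - u / Ω) *
            ∑ s : Fin S, η s * ((1 / ((L₁ : ℂ) * (L₂ : ℂ))) *
              dirichletKernel N₁ ((u - Ω * τ s) / L₁) *
              dirichletKernel N₂ ((v - 𝒯 * ν s) / L₂)) := by
  subst hL₁ hL₂
  intro j hj
  have hΩ' : Ω ≠ 0 := hΩ.ne'
  have h𝒯' : (𝒯:ℂ) ≠ 0 := by exact_mod_cast h𝒯.ne'
  have hL1 : (2*(N₁:ℂ)+1) ≠ 0 := by
    have : ((2*N₁+1 : ℕ) : ℂ) ≠ 0 := by exact_mod_cast (Nat.succ_ne_zero (2*N₁))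
    push_cast at this; exact this
  have hL2 : (2*(N₂:ℂ)+1) ≠ 0 := by
    have : ((2*N₂+1 : ℕ) : ℂ) ≠ 0 := by exact_mod_cast (Nat.succ_ne_zero (2*N₂))
    push_cast at this; exact this
  have c1R : ((2*N₁+1:ℕ):ℝ) = 2*(N₁:ℝ)+1 := by push_cast; ring
  have c2R : ((2*N₂+1:ℕ):ℝ) = 2*(N₂:ℝ)+1 := by push_cast; ring
  have c1C : ((2*N₁+1:ℕ):ℂ) = 2*(N₁:ℂ)+1 := by push_cast; ring
  have c2C : ((2*N₂+1:ℕ):ℂ) = 2*(N₂:ℂ)+1 := by push_cast; ring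
  simp only [c1R, c2R, c1C, c2C]
  have hw' : ∀ x : ℝ, w x = ∑ k ∈ Finset.Icc (-(N₁:ℤ)) (N₁:ℤ),
      wc k * Complex.exp (2*Real.pi*Complex.I*Ω*k*x/(2*(N₁:ℂ)+1)) := by
    intro x; rw [hw x]; simp only [c1C]
  have key1 : ∀ s : Fin S,
      ∑ u ∈ Finset.Icc (-(N₁:ℤ)) (N₁:ℤ),
        w (𝒯 * j / (2*(N₂:ℝ)+1) - u/Ω) * dirichletKernel N₁ ((u - Ω*τ s)/(2*(N₁:ℝ)+1))
      = (2*(N₁:ℂ)+1) * w (𝒯 * j / (2*(N₂:ℝ)+1) - τ s) := by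
    intro s
    have := keyU N₁ Ω hΩ' wc w hw' (𝒯 * j / (2*(N₂:ℝ)+1)) (τ s)
    push_cast at this
    exact this
  have key2 : ∀ s : Fin S,
      ∑ v ∈ Finset.Icc (-(N₂:ℤ)) (N₂:ℤ),
        Complex.exp (2*Real.pi*Complex.I*((𝒯:ℂ) * (j:ℂ) / (2*(N₂:ℂ)+1))*v/(𝒯:ℂ)) *
          dirichletKernel N₂ ((v - 𝒯*ν s)/(2*(N₂:ℝ)+1))
      = (2*(N₂:ℂ)+1) * Complex.exp (2*Real.pi*Complex.I*(ν s)*((𝒯:ℂ) * (j:ℂ) / (2*(N₂:ℂ)+1))) := by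
    intro s
    have hE : ∀ v : ℤ, Complex.exp (2*Real.pi*Complex.I*((𝒯:ℂ) * (j:ℂ) / (2*(N₂:ℂ)+1))*v/(𝒯:ℂ))
        = Complex.exp (2*Real.pi*Complex.I*j*v/(2*(N₂:ℂ)+1)) := by
      intro v; congr 1; push_cast; field_simp
    simp only [hE]
    rw [key_orth N₂ hj (𝒯 * ν s)]
    rw [c2C]
    congr 1
    congr 1
    push_cast
    field_simp
  symm
  calc
    ∑ u ∈ Finset.Icc (-(N₁:ℤ)) (N₁:ℤ), ∑ v ∈ Finset.Icc (-(N₂:ℤ)) (N₂:ℤ),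
        Complex.exp (2*Real.pi*Complex.I*((𝒯:ℂ) * (j:ℂ) / (2*(N₂:ℂ)+1))*v/(𝒯:ℂ)) *
          w (𝒯 * j / (2*(N₂:ℝ)+1) - u/Ω) *
          ∑ s : Fin S, η s * ((1 / ((2*(N₁:ℂ)+1) * (2*(N₂:ℂ)+1))) *
            dirichletKernel N₁ ((u - Ω*τ s)/(2*(N₁:ℝ)+1)) *
            dirichletKernel N₂ ((v - 𝒯*ν s)/(2*(N₂:ℝ)+1)))
      = ∑ u ∈ Finset.Icc (-(N₁:ℤ)) (N₁:ℤ), ∑ s : Fin S, ∑ v ∈ Finset.Icc (-(N₂:ℤ)) (N₂:ℤ),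
          (η s * (1 / ((2*(N₁:ℂ)+1) * (2*(N₂:ℂ)+1)))) *
          ((w (𝒯 * j / (2*(N₂:ℝ)+1) - u/Ω) * dirichletKernel N₁ ((u - Ω*τ s)/(2*(N₁:ℝ)+1))) *
           (Complex.exp (2*Real.pi*Complex.I*((𝒯:ℂ) * (j:ℂ) / (2*(N₂:ℂ)+1))*v/(𝒯:ℂ)) *
            dirichletKernel N₂ ((v - 𝒯*ν s)/(2*(N₂:ℝ)+1)))) := by
        exact Finset.sum_congr rfl fun u _ =>
          (Finset.sum_congr rfl fun v _ => by
            rw [Finset.mul_sum]; exact Finset.sum_congr rfl fun s _ => by ring).trans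
          Finset.sum_comm
    _ = ∑ s : Fin S, ∑ u ∈ Finset.Icc (-(N₁:ℤ)) (N₁:ℤ), ∑ v ∈ Finset.Icc (-(N₂:ℤ)) (N₂:ℤ),
          (η s * (1 / ((2*(N₁:ℂ)+1) * (2*(N₂:ℂ)+1)))) *
          ((w (𝒯 * j / (2*(N₂:ℝ)+1) - u/Ω) * dirichletKernel N₁ ((u - Ω*τ s)/(2*(N₁:ℝ)+1))) *
           (Complex.exp (2*Real.pi*Complex.I*((𝒯:ℂ) * (j:ℂ) / (2*(N₂:ℂ)+1))*v/(𝒯:ℂ)) *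
            dirichletKernel N₂ ((v - 𝒯*ν s)/(2*(N₂:ℝ)+1)))) := Finset.sum_comm
    _ = ∑ s : Fin S, η s * Complex.exp (2*Real.pi*Complex.I*(ν s)*((𝒯:ℂ) * (j:ℂ) / (2*(N₂:ℂ)+1))) *
          w (𝒯 * j / (2*(N₂:ℝ)+1) - τ s) := by
        refine Finset.sum_congr rfl fun s _ => ?_
        have hfac : ∑ u ∈ Finset.Icc (-(N₁:ℤ)) (N₁:ℤ), ∑ v ∈ Finset.Icc (-(N₂:ℤ)) (N₂:ℤ),
            (η s * (1 / ((2*(N₁:ℂ)+1) * (2*(N₂:ℂ)+1)))) *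
            ((w (𝒯 * j / (2*(N₂:ℝ)+1) - u/Ω) * dirichletKernel N₁ ((u - Ω*τ s)/(2*(N₁:ℝ)+1))) *
             (Complex.exp (2*Real.pi*Complex.I*((𝒯:ℂ) * (j:ℂ) / (2*(N₂:ℂ)+1))*v/(𝒯:ℂ)) *
              dirichletKernel N₂ ((v - 𝒯*ν s)/(2*(N₂:ℝ)+1))))
            = (η s * (1 / ((2*(N₁:ℂ)+1) * (2*(N₂:ℂ)+1)))) *
              ((∑ u ∈ Finset.Icc (-(N₁:ℤ)) (N₁:ℤ),
                 w (𝒯 * j / (2*(N₂:ℝ)+1) - u/Ω) * dirichletKernel N₁ ((u - Ω*τ s)/(2*(N₁:ℝ)+1))) *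
               (∑ v ∈ Finset.Icc (-(N₂:ℤ)) (N₂:ℤ),
                 Complex.exp (2*Real.pi*Complex.I*((𝒯:ℂ) * (j:ℂ) / (2*(N₂:ℂ)+1))*v/(𝒯:ℂ)) *
                  dirichletKernel N₂ ((v - 𝒯*ν s)/(2*(N₂:ℝ)+1)))) := by
          rw [Finset.sum_mul_sum, Finset.mul_sum]
          refine Finset.sum_congr rfl fun u _ => ?_
          rw [Finset.mul_sum]
        rw [hfac, key1 s, key2 s]
        field_simp
end

section
/- Let q be a Schwartz function on ℝ with supp q ⊆ [−Ω_q/2, Ω_q/2] for some Ω_q > 0, let a > 0 satisfy a Ω_q < 1, let N ∈ ℕ and L = 2N + 1. Then for every u ∈ ℤ and τ ∈ ℝ, Σ_{r ∈ ℤ} q̂(a (r L + u) − τ) = (1/(a L)) Σ_{k = −N}^{N} q(−k/(a L)) e^{2πi k (a u − τ)/(a L)}, where the series on the left converges absolutely. -/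
open MeasureTheory
open Real Complex FourierTransform

lemma affine_tempGrowth (T c : ℝ) : Function.HasTemperateGrowth (fun x : ℝ => T * x + c) := by
  have hd : ∀ x : ℝ, HasDerivAt (fun x : ℝ => T * x + c) T x := fun x =>
    by simpa using ((hasDerivAt_id x).const_mul T).add_const c
  apply Function.HasTemperateGrowth.of_fderiv (k := 1) (C := |T| + |c|)
  · have : (fderiv ℝ fun x : ℝ => T * x + c) =
        fun _ => ContinuousLinearMap.smulRight (1 : ℝ →L[ℝ] ℝ) T := by
      funext x; exact ((hd x).hasFDerivAt).fderiv
    rw [this]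
    exact Function.HasTemperateGrowth.const _
  · exact fun x => (hd x).differentiableAt
  · intro x
    have h1 : ‖T * x + c‖ ≤ |T| * |x| + |c| := by
      calc ‖T * x + c‖ ≤ |T * x| + |c| := abs_add_le _ _
      _ = |T| * |x| + |c| := by rw [abs_mul]
    refine h1.trans ?_
    have hx : (0:ℝ) ≤ |x| := abs_nonneg x
    have : ‖x‖ = |x| := rfl
    rw [this, pow_one]
    nlinarith [abs_nonneg T, abs_nonneg c]

lemma affine_antilip {T : ℝ} (hT : 0 < T) (c : ℝ) :
    AntilipschitzWith (⟨T⁻¹, by positivity⟩ : NNReal) (fun x : ℝ => T * x + c) := by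
  apply AntilipschitzWith.of_le_mul_dist
  intro x y
  simp only [Real.dist_eq, NNReal.coe_mk]
  have : T * x + c - (T * y + c) = T * (x - y) := by ring
  rw [this, abs_mul, abs_of_pos hT]
  change |x - y| ≤ T⁻¹ * (T * |x - y|)
  rw [← mul_assoc, inv_mul_cancel₀ hT.ne', one_mul]

lemma fourier_affine (f : ℝ → ℂ) {T : ℝ} (hT : 0 < T) (c ξ : ℝ) :
    FourierTransform.fourier (fun x => f (T * x + c)) ξ
      = ((T : ℂ))⁻¹ * (Complex.exp (2 * Real.pi * Complex.I * ξ * c / T) *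
          FourierTransform.fourier f (ξ / T)) := by
  rw [Real.fourier_real_eq_integral_exp_smul,
    Real.fourier_real_eq_integral_exp_smul]
  have step1 : (∫ x : ℝ, Complex.exp (↑(-2 * π * x * ξ) * Complex.I) • f (T * x + c))
      = ∫ x : ℝ, (fun y : ℝ =>
          Complex.exp (↑(-2 * π * (y / T) * ξ) * Complex.I) • f (y + c)) (T * x) := by
    congr 1; funext x
    simp [mul_div_cancel_left₀ _ hT.ne']
  rw [step1, MeasureTheory.Measure.integral_comp_mul_left
    (fun y : ℝ => Complex.exp (↑(-2 * π * (y / T) * ξ) * Complex.I) • f (y + c)) T]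
  have step2 : (∫ y : ℝ, Complex.exp (↑(-2 * π * (y / T) * ξ) * Complex.I) • f (y + c))
      = ∫ z : ℝ, Complex.exp (↑(-2 * π * ((z - c) / T) * ξ) * Complex.I) • f z := by
    rw [← MeasureTheory.integral_add_right_eq_self
      (fun z : ℝ => Complex.exp (↑(-2 * π * ((z - c) / T) * ξ) * Complex.I) • f z) c]
    congr 1; funext y
    simp only [add_sub_cancel_right]
  rw [step2]
  have step3 : (∫ z : ℝ, Complex.exp (↑(-2 * π * ((z - c) / T) * ξ) * Complex.I) • f z)
      = Complex.exp (2 * Real.pi * Complex.I * ξ * c / T) *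
          ∫ z : ℝ, Complex.exp (↑(-2 * π * z * (ξ / T)) * Complex.I) • f z := by
    rw [← MeasureTheory.integral_const_mul]
    congr 1; funext z
    rw [smul_eq_mul, smul_eq_mul, ← mul_assoc, ← Complex.exp_add]
    congr 1
    push_cast
    field_simp
    ring
  rw [step3]
  have h4 : |T⁻¹| = T⁻¹ := abs_of_pos (by positivity)
  rw [h4, Complex.real_smul]
  push_cast
  ring

/-- **Aliasing formula for samples of the Fourier transform of a compactly supported
Schwartz function.**  Let `q` be a Schwartz function with `supp q ⊆ [−Ω_q/2, Ω_q/2]`,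
`Ω_q > 0`, let `a > 0` with `a Ω_q < 1`, `N ∈ ℕ`, `L = 2N + 1`.  Then for every `u ∈ ℤ`
and `τ ∈ ℝ`,
`Σ_{r ∈ ℤ} q̂(a(rL + u) − τ) = (1/(aL)) Σ_{k=−N}^{N} q(−k/(aL)) e^{2πi k (a u − τ)/(aL)}`,
where the series on the left converges absolutely. -/
theorem schwartz_fourier_aliasing
    (Ωq : ℝ) (hΩq : 0 < Ωq)
    (q : SchwartzMap ℝ ℂ) (hq_supp : Function.support (⇑q) ⊆ Set.Icc (-(Ωq / 2)) (Ωq / 2))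
    (a : ℝ) (ha : 0 < a) (haΩ : a * Ωq < 1)
    (N : ℕ) (L : ℕ) (hL : L = 2 * N + 1) :
    ∀ (u : ℤ) (τ : ℝ),
      (Summable fun r : ℤ => ‖FourierTransform.fourier (⇑q : ℝ → ℂ) (a * (r * L + u) - τ)‖) ∧
        HasSum (fun r : ℤ => FourierTransform.fourier (⇑q : ℝ → ℂ) (a * (r * L + u) - τ))
          ((1 / ((a : ℂ) * L)) * ∑ k ∈ Finset.Icc (-(N : ℤ)) (N : ℤ),
            q (-(k : ℝ) / (a * L)) *
              Complex.exp (2 * Real.pi * Complex.I * k * (a * u - τ) / (a * L))) := by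
  intro u τ
  have hLpos : (0 : ℝ) < (L : ℝ) := by
    rw [hL]; positivity
  set T : ℝ := a * L with hTdef
  have hT : 0 < T := mul_pos ha hLpos
  set c : ℝ := a * u - τ with hcdef
  set Q : SchwartzMap ℝ ℂ := SchwartzMap.fourierTransformCLM ℝ q with hQdef
  set g : SchwartzMap ℝ ℂ :=
    SchwartzMap.compCLMOfAntilipschitz ℝ (affine_tempGrowth T c) (affine_antilip hT c) Q
    with hgdef
  have hg : ⇑g = fun x : ℝ => FourierTransform.fourier ⇑q (T * x + c) := rfl
  -- the LHS function equals n ↦ g n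
  have hfun : (fun r : ℤ => FourierTransform.fourier ⇑q (a * (r * L + u) - τ))
      = fun n : ℤ => g (n : ℝ) := by
    funext n
    rw [hg]
    congr 1
    push_cast
    rw [hTdef, hcdef]; ring_nf
  -- summability of norms
  have hsum : Summable fun n : ℤ => ‖g (n : ℝ)‖ := by
    have h1 := g.isBigO_cocompact_rpow (-2)
    have h2 : (fun x : ℝ => ‖x‖ ^ (-2 : ℝ)) = fun x : ℝ => |x| ^ (-2 : ℝ) := by
      funext x; rw [Real.norm_eq_abs]
    rw [h2] at h1
    exact summable_of_isBigO (Real.summable_abs_int_rpow one_lt_two)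
      (h1.norm_left.comp_tendsto Int.tendsto_coe_cofinite)
  -- Fourier transform of g
  have hqq : ∀ x : ℝ, FourierTransform.fourier (FourierTransform.fourier ⇑q) x = q (-x) := by
    intro x
    have h1 : FourierTransformInv.fourierInv (FourierTransform.fourier ⇑q) (-x) = q (-x) :=
      MeasureTheory.Integrable.fourierInv_fourier_eq q.integrable Q.integrable
        (q.continuous.continuousAt)
    rw [Real.fourierInv_eq_fourier_neg, neg_neg] at h1
    exact h1
  have hFg : ∀ ξ : ℝ, FourierTransform.fourier ⇑g ξ
      = ((T : ℂ))⁻¹ * (Complex.exp (2 * Real.pi * Complex.I * ξ * c / T) * q (-(ξ / T))) := by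
    intro ξ
    rw [hg, fourier_affine (FourierTransform.fourier ⇑q) hT c ξ, hqq (ξ / T)]
  -- vanishing outside [-N, N]
  have hvan : ∀ k : ℤ, k ∉ Finset.Icc (-(N : ℤ)) (N : ℤ) → q (-((k : ℝ) / T)) = 0 := by
    intro k hk
    by_contra h
    have hmem := hq_supp (Function.mem_support.mpr h)
    rw [Set.mem_Icc] at hmem
    have habs : |(k : ℝ)| / T ≤ Ωq / 2 := by
      have := abs_le.mpr hmem
      rwa [abs_neg, abs_div, abs_of_pos hT] at this
    have hklarge : (N : ℝ) + 1 ≤ |(k : ℝ)| := by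
      rw [Finset.mem_Icc] at hk
      push_neg at hk
      rcases le_or_gt (-(N : ℤ)) k with h1 | h1
      · have h2 := hk h1
        have : (N : ℤ) + 1 ≤ k := h2
        calc (N : ℝ) + 1 ≤ (k : ℝ) := by exact_mod_cast this
          _ ≤ |(k : ℝ)| := le_abs_self _
      · have : (N : ℤ) + 1 ≤ -k := by omega
        calc (N : ℝ) + 1 ≤ (-k : ℤ) := by exact_mod_cast this
          _ = -(k : ℝ) := by push_cast; ring
          _ ≤ |(k : ℝ)| := neg_le_abs _
    have hkb : |(k : ℝ)| ≤ T * Ωq / 2 := by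
      rw [div_le_iff₀ hT] at habs
      linarith [habs]
    have hTΩ : T * Ωq < (L : ℝ) := by
      calc T * Ωq = (a * Ωq) * L := by rw [hTdef]; ring
        _ < 1 * L := by
          apply mul_lt_mul_of_pos_right haΩ hLpos
        _ = (L : ℝ) := one_mul _
    have hLval : (L : ℝ) = 2 * (N : ℝ) + 1 := by rw [hL]; push_cast; ring
    nlinarith
  -- summability of the Fourier transforms of g over ℤ
  have hFg0 : ∀ k : ℤ, k ∉ Finset.Icc (-(N : ℤ)) (N : ℤ) → FourierTransform.fourier ⇑g (k : ℝ) = 0 := by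
    intro k hk
    rw [hFg, hvan k hk, mul_zero, mul_zero]
  have hFsummable : Summable fun n : ℤ => FourierTransform.fourier ⇑g (n : ℝ) :=
    summable_of_ne_finset_zero hFg0
  -- Poisson summation
  have hbigO : ⇑g =O[Filter.cocompact ℝ] (|·| ^ (-2 : ℝ)) := by
    have h1 := g.isBigO_cocompact_rpow (-2)
    have h2 : (fun x : ℝ => ‖x‖ ^ (-2 : ℝ)) = (|·| ^ (-2 : ℝ)) := by
      funext x; rw [Real.norm_eq_abs]
    rwa [h2] at h1
  have hP := Real.tsum_eq_tsum_fourier_of_rpow_decay_of_summable g.continuous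
    one_lt_two hbigO hFsummable 0
  -- compute the right-hand side of Poisson
  have hRHS : ∑' n : ℤ, FourierTransform.fourier ⇑g (n : ℝ) * fourier n ((0 : ℝ) : UnitAddCircle)
      = (1 / ((a : ℂ) * L)) * ∑ k ∈ Finset.Icc (-(N : ℤ)) (N : ℤ),
          q (-(k : ℝ) / (a * L)) *
            Complex.exp (2 * Real.pi * Complex.I * k * ((a : ℂ) * u - τ) / (a * L)) := by
    have h0 : ((0 : ℝ) : UnitAddCircle) = (0 : UnitAddCircle) := by norm_num
    have h1 : ∀ n : ℤ, FourierTransform.fourier ⇑g (n : ℝ) * fourier n ((0 : ℝ) : UnitAddCircle)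
        = FourierTransform.fourier ⇑g (n : ℝ) := by
      intro n
      rw [h0, fourier_eval_zero, mul_one]
    rw [tsum_congr h1]
    rw [tsum_eq_sum (s := Finset.Icc (-(N : ℤ)) (N : ℤ)) hFg0]
    rw [Finset.mul_sum]
    apply Finset.sum_congr rfl
    intro k _
    rw [hFg]
    rw [hTdef, hcdef]
    have hane : (a : ℂ) ≠ 0 := by exact_mod_cast ha.ne'
    have hLne : ((L : ℝ) : ℂ) ≠ 0 := by exact_mod_cast hLpos.ne'
    push_cast
    rw [neg_div]
    field_simp
  -- conclude
  constructor
  · rw [show (fun r : ℤ => ‖FourierTransform.fourier ⇑q (a * (r * L + u) - τ)‖)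
        = fun n : ℤ => ‖g (n : ℝ)‖ by funext n; rw [congrFun hfun n]]
    exact hsum
  · rw [hfun]
    have hS : Summable fun n : ℤ => g ((n : ℤ) : ℝ) := hsum.of_norm
    have htsum : ∑' n : ℤ, g ((n : ℤ) : ℝ)
        = (1 / ((a : ℂ) * L)) * ∑ k ∈ Finset.Icc (-(N : ℤ)) (N : ℤ),
            q (-(k : ℝ) / (a * L)) *
              Complex.exp (2 * Real.pi * Complex.I * k * ((a : ℂ) * u - τ) / (a * L)) := by
      have h0 : (fun n : ℤ => g ((n : ℤ) : ℝ)) = fun n : ℤ => g ((0 : ℝ) + (n : ℝ)) := by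
        funext n; rw [zero_add]
      rw [h0, hP, hRHS]
    have := hS.hasSum
    rw [htsum] at this
    convert this using 2 <;> push_cast <;> ring
end
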